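/- Let V = {1,2,3,4,5,6}, E = {{1,2,3,4,5,6}, {1,2}, {3,4}, {5,6}, {1,2,3,4}, {1,2,5,6}, {3,4,5,6}, {1,3}, {2,4}, {1,5}, {2,6}, {3,5}, {4,6}}, and let D₀ be the recursive linearization with node set E ∪ S and arcs ({1,2,3,4,5,6},{1,2}), ({1,2,3,4,5,6},{3,4}), ({1,2,3,4,5,6},{5,6}), ({1,2,3,4},{1,3}), ({1,2,3,4},{2,4}), ({1,2,5,6},{1,5}), ({1,2,5,6},{2,6}), ({3,4,5,6},{3,5}), ({3,4,5,6},{4,6}), and arcs from each of the two-element nodes {1,2}, {3,4}, {5,6}, {1,3}, {2,4}, {1,5}, {2,6}, {3,5}, {4,6} to the singletons of their two elements. Then every recursive linearization D over ground set V with E ⊆ 𝒱(D) and P_E(D) ⊆ P(D₀) is non-binary, i.e., D has a non-singleton node with at least three successors. -/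

import Mathlib

open Finset

set_option maxRecDepth 2000

/-- A set `I` is a singleton `{v}`. -/
def IsSingleton {V : Type} (I : Finset V) : Prop := ∃ v : V, I = {v}

instance {V : Type} [DecidableEq V] [Fintype V] (I : Finset V) :
    Decidable (IsSingleton I) :=
  inferInstanceAs (Decidable (∃ v : V, I = {v}))

/-- The successors of node `I` in the arc set `A`. -/
def succOf {V : Type} [DecidableEq V] (A : Finset (Finset V × Finset V))
    (I : Finset V) : Finset (Finset V) :=
  (A.filter fun a => a.1 = I).image Prod.snd

/-- A recursive linearization over the finite ground set `V`: a simple digraph whose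
nodes are nonempty subsets of `V` including all singletons, where each arc goes from a
set to a subset, and the successors of every non-singleton node cover it. -/
structure RecLin (V : Type) [Fintype V] [DecidableEq V] where
  nodes : Finset (Finset V)
  arcs : Finset (Finset V × Finset V)
  arcs_fst_mem : ∀ a ∈ arcs, a.1 ∈ nodes
  arcs_snd_mem : ∀ a ∈ arcs, a.2 ∈ nodes
  no_loops : ∀ a ∈ arcs, a.1 ≠ a.2
  singleton_mem : ∀ v : V, ({v} : Finset V) ∈ nodes
  nodes_nonempty : ∀ I ∈ nodes, I.Nonempty
  arcs_subset : ∀ a ∈ arcs, a.2 ⊆ a.1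
  succ_union : ∀ I ∈ nodes, ¬ IsSingleton I → (succOf arcs I).biUnion id = I

/-- The relaxation `P(D)` of a recursive linearization, as a subset of `ℝ^{Finset V}`
constraining only the coordinates indexed by nodes of `D`. -/
def relax {V : Type} [Fintype V] [DecidableEq V] (D : RecLin V) :
    Set (Finset V → ℝ) :=
  { z | (∀ I ∈ D.nodes, 0 ≤ z I ∧ z I ≤ 1)
      ∧ (∀ a ∈ D.arcs, z a.1 ≤ z a.2)
      ∧ (∀ I ∈ D.nodes, ¬ IsSingleton I →
          z I + ∑ J ∈ succOf D.arcs I, (1 - z J) ≥ 1) }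

/-- The projected relaxation `P_T(D)`: the orthogonal projection of `P(D)` onto the
coordinates indexed by `T ∪ S` (`S` = singletons). -/
def projRelax {V : Type} [Fintype V] [DecidableEq V] (D : RecLin V)
    (T : Finset (Finset V)) : Set (Finset V → ℝ) :=
  { z | ∃ w ∈ relax D, ∀ I : Finset V, (I ∈ T ∨ IsSingleton I) → w I = z I }

/-- `D` is a recursive linearization of the hypergraph `G = (V, E)`. -/
def RecLinOf {V : Type} [Fintype V] [DecidableEq V] (D : RecLin V)
    (E : Finset (Finset V)) : Prop :=
  E ⊆ D.nodes ∧ ∀ I ∈ D.nodes, (∀ a ∈ D.arcs, a.2 ≠ I) → (I ∈ E ∨ IsSingleton I)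

/-- `D` is partitioning: the successors of every node are pairwise disjoint. -/
def Partitioning {V : Type} [Fintype V] [DecidableEq V] (D : RecLin V) : Prop :=
  ∀ I ∈ D.nodes, ∀ J ∈ succOf D.arcs I, ∀ J' ∈ succOf D.arcs I, J ≠ J' → J ∩ J' = ∅

/-- `D` is binary: every non-singleton node has exactly two successors. -/
def Binary {V : Type} [Fintype V] [DecidableEq V] (D : RecLin V) : Prop :=
  ∀ I ∈ D.nodes, ¬ IsSingleton I → (succOf D.arcs I).card = 2

/-- A recursive McCormick linearization is partitioning and binary. -/
def McCormick {V : Type} [Fintype V] [DecidableEq V] (D : RecLin V) : Prop :=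
  Partitioning D ∧ Binary D

/-- The extended flower relaxation of the hypergraph `G = (V, E)`, as a subset of
`ℝ^{Finset V}` constraining only the coordinates indexed by `E ∪ S`. -/
def flowerRel {V : Type} [Fintype V] [DecidableEq V] (E : Finset (Finset V)) :
    Set (Finset V → ℝ) :=
  { z | (∀ I : Finset V, (I ∈ E ∨ IsSingleton I) → 0 ≤ z I ∧ z I ≤ 1)
      ∧ (∀ I ∈ E, ∀ v ∈ I, z I ≤ z {v})
      ∧ (∀ I ∈ E, ∀ k : ℕ, ∀ J : Fin k → Finset V,
          (∀ i, J i ∈ E ∨ IsSingleton (J i)) →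
          I ⊆ Finset.univ.biUnion J →
          (∀ i, (J i ∩ I).Nonempty) →
          z I + ∑ i, (1 - z (J i)) ≥ 1) }

/-- The multilinear polytope `ML(G)`: the convex hull of the 0/1 points whose
`E`-coordinates are the products of the corresponding singleton coordinates. -/
def ML {V : Type} [Fintype V] [DecidableEq V] (E : Finset (Finset V)) :
    Set (Finset V → ℝ) :=
  convexHull ℝ { z : Finset V → ℝ |
    (∀ I : Finset V, (I ∈ E ∨ IsSingleton I) → z I = 0 ∨ z I = 1)
    ∧ ∀ I ∈ E, z I = ∏ v ∈ I, z {v} }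

/-- The hypergraph of Figure (b): `V = {1,…,6}` (encoded as `Fin 6` via `i ↦ i-1`). -/
def E7 : Finset (Finset (Fin 6)) :=
  {{0,1,2,3,4,5}, {0,1}, {2,3}, {4,5}, {0,1,2,3}, {0,1,4,5}, {2,3,4,5},
   {0,2}, {1,3}, {0,4}, {1,5}, {2,4}, {3,5}}

/-- The non-binary recursive linearization `D₀` of Figure (b). -/
def D7 : RecLin (Fin 6) where
  nodes := {{0,1,2,3,4,5}, {0,1}, {2,3}, {4,5}, {0,1,2,3}, {0,1,4,5}, {2,3,4,5},
            {0,2}, {1,3}, {0,4}, {1,5}, {2,4}, {3,5},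
            {0}, {1}, {2}, {3}, {4}, {5}}
  arcs := {({0,1,2,3,4,5},{0,1}), ({0,1,2,3,4,5},{2,3}), ({0,1,2,3,4,5},{4,5}),
           ({0,1,2,3},{0,2}), ({0,1,2,3},{1,3}),
           ({0,1,4,5},{0,4}), ({0,1,4,5},{1,5}),
           ({2,3,4,5},{2,4}), ({2,3,4,5},{3,5}),
           ({0,1},{0}), ({0,1},{1}), ({2,3},{2}), ({2,3},{3}), ({4,5},{4}), ({4,5},{5}),
           ({0,2},{0}), ({0,2},{2}), ({1,3},{1}), ({1,3},{3}),
           ({0,4},{0}), ({0,4},{4}), ({1,5},{1}), ({1,5},{5}),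
           ({2,4},{2}), ({2,4},{4}), ({3,5},{3}), ({3,5},{5})}
  arcs_fst_mem := by intro a ha; fin_cases ha <;> decide
  arcs_snd_mem := by intro a ha; fin_cases ha <;> decide
  no_loops := by intro a ha; fin_cases ha <;> decide
  singleton_mem := by decide
  nodes_nonempty := by intro I hI; fin_cases hI <;> decide
  arcs_subset := by intro a ha; fin_cases ha <;> decide
  succ_union := by intro I hI; fin_cases hI <;> decide


/-! ### Auxiliary machinery -/

namespace NB

lemma mem_succOf {A : Finset (Finset (Fin 6) × Finset (Fin 6))} {I J : Finset (Fin 6)} :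
    J ∈ succOf A I ↔ (I, J) ∈ A := by
  constructor
  · intro h
    obtain ⟨⟨x, y⟩, ha, h2⟩ := Finset.mem_image.1 h
    obtain ⟨ha1, hx⟩ := Finset.mem_filter.1 ha
    simp only at hx h2
    subst hx; subst h2; exact ha1
  · intro h
    exact Finset.mem_image.2 ⟨(I, J), Finset.mem_filter.2 ⟨h, rfl⟩, rfl⟩

/-- The arc relation of a recursive linearization. -/
def arc (D : RecLin (Fin 6)) : Finset (Fin 6) → Finset (Fin 6) → Prop :=
  fun X Y => (X, Y) ∈ D.arcs

lemma arc_ssubset {D : RecLin (Fin 6)} {I J : Finset (Fin 6)} (h : (I, J) ∈ D.arcs) :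
    J ⊂ I :=
  HasSubset.Subset.ssubset_of_ne (D.arcs_subset _ h) fun he => D.no_loops _ h he.symm

lemma reach_subset {D : RecLin (Fin 6)} {I K : Finset (Fin 6)}
    (h : Relation.ReflTransGen (arc D) I K) : K ⊆ I := by
  induction h with
  | refl => exact subset_rfl
  | tail _ h₂ ih => exact (D.arcs_subset _ h₂).trans ih

lemma reach_step {D : RecLin (Fin 6)} {I K : Finset (Fin 6)}
    (h : Relation.ReflTransGen (arc D) I K) (hne : K ≠ I) :
    ∃ X ∈ succOf D.arcs I, Relation.ReflTransGen (arc D) X K ∧ K ⊆ X := by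
  rcases Relation.ReflTransGen.cases_head h with h' | ⟨X, hIX, hXK⟩
  · exact absurd h'.symm hne
  · exact ⟨X, mem_succOf.2 hIX, hXK, reach_subset hXK⟩

lemma not_arc_of_singleton {D : RecLin (Fin 6)} {I K : Finset (Fin 6)}
    (hs : IsSingleton I) (h : (I, K) ∈ D.arcs) : False := by
  obtain ⟨v, rfl⟩ := hs
  have h2 : K ⊆ {v} := D.arcs_subset _ h
  have h3 : ({v} : Finset (Fin 6)) ≠ K := D.no_loops _ h
  have h4 : K.Nonempty := D.nodes_nonempty _ (D.arcs_snd_mem _ h)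
  rcases Finset.subset_singleton_iff.1 h2 with rfl | rfl
  · exact h4.ne_empty rfl
  · exact h3 rfl

lemma pair_not_singleton : ∀ a b : Fin 6, a ≠ b → ¬ IsSingleton ({a, b} : Finset (Fin 6)) := by
  decide

lemma subset_pair_cases : ∀ a b : Fin 6, ∀ J : Finset (Fin 6),
    a ≠ b → J ⊆ {a, b} → J.Nonempty → J ≠ {a, b} → J = {a} ∨ J = {b} := by
  decide

lemma biUnion_pair (A B : Finset (Fin 6)) :
    (({A, B} : Finset (Finset (Fin 6))).biUnion id) = A ∪ B := by
  simp [Finset.biUnion_insert]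

/-- In any recursive linearization, a two-element node has exactly its two
singletons as successors. -/
lemma pair_succ {D : RecLin (Fin 6)} {a b : Fin 6} (hab : a ≠ b)
    (hnode : ({a, b} : Finset (Fin 6)) ∈ D.nodes) :
    succOf D.arcs {a, b} = {{a}, {b}} := by
  have hsub : succOf D.arcs {a, b} ⊆ {{a}, {b}} := by
    intro J hJ
    have harc := mem_succOf.1 hJ
    have h1 : J ⊆ {a, b} := D.arcs_subset _ harc
    have h2 : ({a, b} : Finset (Fin 6)) ≠ J := D.no_loops _ harc
    have h3 : J.Nonempty := D.nodes_nonempty _ (D.arcs_snd_mem _ harc)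
    rcases subset_pair_cases a b J hab h1 h3 (Ne.symm h2) with rfl | rfl
    · exact Finset.mem_insert_self _ _
    · exact Finset.mem_insert_of_mem (Finset.mem_singleton_self _)
  have huni := D.succ_union _ hnode (pair_not_singleton a b hab)
  apply Finset.Subset.antisymm hsub
  intro K hK
  rcases Finset.mem_insert.1 hK with rfl | hK
  · -- {a} ∈ succOf
    have ha : a ∈ (succOf D.arcs {a, b}).biUnion id := by
      rw [huni]; exact Finset.mem_insert_self _ _
    obtain ⟨J, hJ, haJ⟩ := Finset.mem_biUnion.1 ha
    rcases Finset.mem_insert.1 (hsub hJ) with rfl | hJ'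
    · exact hJ
    · rw [Finset.mem_singleton] at hJ'
      subst hJ'
      exact absurd (Finset.mem_singleton.1 haJ) hab
  · rw [Finset.mem_singleton] at hK
    subst hK
    have hb : b ∈ (succOf D.arcs {a, b}).biUnion id := by
      rw [huni]; exact Finset.mem_insert_of_mem (Finset.mem_singleton_self _)
    obtain ⟨J, hJ, hbJ⟩ := Finset.mem_biUnion.1 hb
    rcases Finset.mem_insert.1 (hsub hJ) with rfl | hJ'
    · exact absurd (Finset.mem_singleton.1 hbJ) (Ne.symm hab)
    · rw [Finset.mem_singleton] at hJ'
      subst hJ'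
      exact hJ

/-! ### The minimal point of `P(D)` with singleton values `t` -/

noncomputable def mp (D : RecLin (Fin 6)) (t : ℝ) (I : Finset (Fin 6)) : ℝ :=
  if IsSingleton I then t
  else max 0 (1 - ∑ J ∈ (succOf D.arcs I).attach, (1 - mp D t J.1))
termination_by I.card
decreasing_by
  exact Finset.card_lt_card (arc_ssubset (mem_succOf.1 J.2))

lemma mp_singleton (D : RecLin (Fin 6)) (t : ℝ) {I : Finset (Fin 6)}
    (h : IsSingleton I) : mp D t I = t := by
  rw [mp, if_pos h]

lemma mp_eq_ns (D : RecLin (Fin 6)) (t : ℝ) {I : Finset (Fin 6)}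
    (h : ¬ IsSingleton I) :
    mp D t I = max 0 (1 - ∑ J ∈ succOf D.arcs I, (1 - mp D t J)) := by
  rw [mp, if_neg h]
  have h2 : ∑ J ∈ (succOf D.arcs I).attach, (1 - mp D t J.1)
      = ∑ J ∈ succOf D.arcs I, (1 - mp D t J) :=
    Finset.sum_attach (succOf D.arcs I) (fun J => 1 - mp D t J)
  rw [h2]

lemma mp_nonneg (D : RecLin (Fin 6)) {t : ℝ} (ht : 0 ≤ t) (I : Finset (Fin 6)) :
    0 ≤ mp D t I := by
  by_cases h : IsSingleton I
  · rw [mp_singleton D t h]; exact ht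
  · rw [mp_eq_ns D t h]; exact le_max_left _ _

lemma mp_le_one (D : RecLin (Fin 6)) {t : ℝ} (ht : t ≤ 1) (I : Finset (Fin 6)) :
    mp D t I ≤ 1 := by
  induction I using Finset.strongInduction with
  | _ I ih =>
    by_cases h : IsSingleton I
    · rw [mp_singleton D t h]; exact ht
    · rw [mp_eq_ns D t h]
      apply max_le (by norm_num)
      have : (0:ℝ) ≤ ∑ J ∈ succOf D.arcs I, (1 - mp D t J) := by
        apply Finset.sum_nonneg
        intro J hJ
        have := ih J (arc_ssubset (mem_succOf.1 hJ))
        linarith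
      linarith

lemma mp_two (D : RecLin (Fin 6)) (t : ℝ) {I A B : Finset (Fin 6)}
    (hns : ¬ IsSingleton I) (hAB : A ≠ B) (hsucc : succOf D.arcs I = {A, B}) :
    mp D t I = max 0 (mp D t A + mp D t B - 1) := by
  rw [mp_eq_ns D t hns, hsucc, Finset.sum_pair hAB]
  congr 1
  ring

lemma mp_pair (D : RecLin (Fin 6)) (t : ℝ) {a b : Fin 6} (hab : a ≠ b)
    (hnode : ({a, b} : Finset (Fin 6)) ∈ D.nodes) :
    mp D t {a, b} = max 0 (2 * t - 1) := by
  rw [mp_two D t (pair_not_singleton a b hab)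
      (fun h => hab (Finset.singleton_injective h)) (pair_succ hab hnode),
    mp_singleton D t ⟨a, rfl⟩, mp_singleton D t ⟨b, rfl⟩]
  congr 1
  ring

lemma mp_mem_relax (D : RecLin (Fin 6)) {t : ℝ} (ht0 : 0 ≤ t) (ht1 : t ≤ 1) :
    mp D t ∈ relax D := by
  refine ⟨fun I _ => ⟨mp_nonneg D ht0 I, mp_le_one D ht1 I⟩, ?_, ?_⟩
  · rintro ⟨I, J⟩ ha
    have hns : ¬ IsSingleton I := fun hs => not_arc_of_singleton hs ha
    have hJ : J ∈ succOf D.arcs I := mem_succOf.2 ha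
    rw [mp_eq_ns D t hns]
    apply max_le (mp_nonneg D ht0 J)
    have hle : (1 - mp D t J) ≤ ∑ K ∈ succOf D.arcs I, (1 - mp D t K) :=
      Finset.single_le_sum (f := fun K => 1 - mp D t K)
        (fun K _ => by have := mp_le_one D ht1 K; linarith) hJ
    linarith
  · intro I _ hns
    rw [mp_eq_ns D t hns]
    have := le_max_right 0 (1 - ∑ J ∈ succOf D.arcs I, (1 - mp D t J))
    linarith

/-- The `σ`-bound on the minimal point at `t = 11/12`, for binary `D`. -/
lemma mp_card_le (D : RecLin (Fin 6)) (hbin : Binary D) :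
    ∀ I ∈ D.nodes, mp D (11/12) I ≤ 1 - I.card * (1/12) := by
  intro I
  induction I using Finset.strongInduction with
  | _ I ih =>
    intro hI
    by_cases hs : IsSingleton I
    · obtain ⟨v, rfl⟩ := hs
      rw [mp_singleton D _ ⟨v, rfl⟩, Finset.card_singleton]
      norm_num
    · obtain ⟨A, B, hAB, hsucc⟩ := Finset.card_eq_two.1 (hbin I hI hs)
      have hA : (I, A) ∈ D.arcs := mem_succOf.1 (hsucc ▸ Finset.mem_insert_self _ _)
      have hB : (I, B) ∈ D.arcs := mem_succOf.1
        (hsucc ▸ Finset.mem_insert_of_mem (Finset.mem_singleton_self _))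
      have ihA := ih A (arc_ssubset hA) (D.arcs_snd_mem _ hA)
      have ihB := ih B (arc_ssubset hB) (D.arcs_snd_mem _ hB)
      have hU : A ∪ B = I := by
        have := D.succ_union I hI hs
        rw [hsucc, biUnion_pair] at this
        exact this
      have hcard : I.card ≤ A.card + B.card := by
        rw [← hU]; exact Finset.card_union_le A B
      have h6 : I.card ≤ 6 := by
        have := Finset.card_le_univ I
        simpa using this
      have hc6 : (I.card : ℝ) ≤ 6 := by exact_mod_cast h6
      have hcR : (I.card : ℝ) ≤ (A.card : ℝ) + (B.card : ℝ) := by exact_mod_cast hcard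
      rw [mp_two D _ hs hAB hsucc]
      apply max_le <;> linarith

/-! ### The half point used for unreachable arcs -/

open Classical in
noncomputable def hp (D : RecLin (Fin 6)) (I0 : Finset (Fin 6)) :
    Finset (Fin 6) → ℝ :=
  fun K => if Relation.ReflTransGen (arc D) I0 K ∨ IsSingleton K then 1/2 else 0

lemma hp_nonneg (D : RecLin (Fin 6)) (I0 K : Finset (Fin 6)) : 0 ≤ hp D I0 K := by
  unfold hp; split <;> norm_num

lemma hp_le_half (D : RecLin (Fin 6)) (I0 K : Finset (Fin 6)) : hp D I0 K ≤ 1/2 := by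
  unfold hp; split <;> norm_num

lemma hp_mem_relax (D : RecLin (Fin 6)) (hbin : Binary D) (I0 : Finset (Fin 6)) :
    hp D I0 ∈ relax D := by
  refine ⟨fun I _ => ⟨hp_nonneg D I0 I, le_trans (hp_le_half D I0 I) (by norm_num)⟩, ?_, ?_⟩
  · rintro ⟨X, Y⟩ ha
    by_cases hX : Relation.ReflTransGen (arc D) I0 X ∨ IsSingleton X
    · rcases hX with hX | hX
      · have hY : Relation.ReflTransGen (arc D) I0 Y := hX.tail ha
        have h1 : hp D I0 X ≤ 1/2 := hp_le_half D I0 X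
        have h2 : hp D I0 Y = 1/2 := by unfold hp; rw [if_pos (Or.inl hY)]
        simpa [h2] using h1
      · exact absurd ha (fun h => not_arc_of_singleton hX h)
    · have h1 : hp D I0 X = 0 := by unfold hp; rw [if_neg hX]
      have h2 := hp_nonneg D I0 Y
      simpa [h1] using h2
  · intro I hI hns
    have hcard := hbin I hI hns
    have hsum : (1 : ℝ) ≤ ∑ J ∈ succOf D.arcs I, (1 - hp D I0 J) := by
      have h := Finset.card_nsmul_le_sum (succOf D.arcs I)
        (fun J => 1 - hp D I0 J) (1/2 : ℝ)
        (fun J _ => by have := hp_le_half D I0 J; linarith)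
      rw [hcard] at h
      simpa using h
    have := hp_nonneg D I0 I
    linarith

/-! ### Case 1 : an unreachable `D₀`-arc -/

lemma case1 (D : RecLin (Fin 6)) (hbin : Binary D)
    (hsub : projRelax D E7 ⊆ relax D7) {I J : Finset (Fin 6)}
    (hIJ : (I, J) ∈ D7.arcs) (hJns : ¬ IsSingleton J)
    (hnr : ¬ Relation.ReflTransGen (arc D) I J) : False := by
  have hmem : hp D I ∈ relax D7 :=
    hsub ⟨hp D I, hp_mem_relax D hbin I, fun _ _ => rfl⟩
  have hle := hmem.2.1 (I, J) hIJ
  have h1 : hp D I I = 1/2 := by unfold hp; rw [if_pos (Or.inl Relation.ReflTransGen.refl)]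
  have h2 : hp D I J = 0 := by unfold hp; rw [if_neg (not_or.2 ⟨hnr, hJns⟩)]
  simp only [h1, h2] at hle
  norm_num at hle

end NB

namespace NB

set_option synthInstance.maxSize 4000 in
set_option synthInstance.maxHeartbeats 1000000 in
set_option maxHeartbeats 4000000 in
lemma shape_lemma : ∀ J1 J2 : Finset (Fin 6),
    J1 ∪ J2 = {0,1,2,3,4,5} → J1 ≠ {0,1,2,3,4,5} → J2 ≠ {0,1,2,3,4,5} →
    ({0,1} ⊆ J1 ∨ {0,1} ⊆ J2) → ({2,3} ⊆ J1 ∨ {2,3} ⊆ J2) → ({4,5} ⊆ J1 ∨ {4,5} ⊆ J2) →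
    J1 ∩ J2 ≠ ∅ ∨
    (J1 = {0,1,2,3} ∧ J2 = {4,5}) ∨ (J1 = {0,1,4,5} ∧ J2 = {2,3}) ∨ (J1 = {2,3,4,5} ∧ J2 = {0,1}) ∨
    (J2 = {0,1,2,3} ∧ J1 = {4,5}) ∨ (J2 = {0,1,4,5} ∧ J1 = {2,3}) ∨ (J2 = {2,3,4,5} ∧ J1 = {0,1}) := by
  decide

set_option synthInstance.maxSize 4000 in
set_option synthInstance.maxHeartbeats 1000000 in
set_option maxHeartbeats 4000000 in
lemma fourset_lemma1 : ∀ A B : Finset (Fin 6), A ∪ B = {0,1,2,3} → A ≠ {0,1,2,3} → B ≠ {0,1,2,3} →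
    ({0,2} ⊆ A ∨ {0,2} ⊆ B) → ({1,3} ⊆ A ∨ {1,3} ⊆ B) → ({0,1} ⊆ A ∨ {0,1} ⊆ B) → ({2,3} ⊆ A ∨ {2,3} ⊆ B) →
    A.card = 3 ∧ B.card = 3 := by
  decide

set_option synthInstance.maxSize 4000 in
set_option synthInstance.maxHeartbeats 1000000 in
set_option maxHeartbeats 4000000 in
lemma fourset_lemma2 : ∀ A B : Finset (Fin 6), A ∪ B = {0,1,4,5} → A ≠ {0,1,4,5} → B ≠ {0,1,4,5} →
    ({0,4} ⊆ A ∨ {0,4} ⊆ B) → ({1,5} ⊆ A ∨ {1,5} ⊆ B) → ({0,1} ⊆ A ∨ {0,1} ⊆ B) → ({4,5} ⊆ A ∨ {4,5} ⊆ B) →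
    A.card = 3 ∧ B.card = 3 := by
  decide

set_option synthInstance.maxSize 4000 in
set_option synthInstance.maxHeartbeats 1000000 in
set_option maxHeartbeats 4000000 in
lemma fourset_lemma3 : ∀ A B : Finset (Fin 6), A ∪ B = {2,3,4,5} → A ≠ {2,3,4,5} → B ≠ {2,3,4,5} →
    ({2,4} ⊆ A ∨ {2,4} ⊆ B) → ({3,5} ⊆ A ∨ {3,5} ⊆ B) → ({2,3} ⊆ A ∨ {2,3} ⊆ B) → ({4,5} ⊆ A ∨ {4,5} ⊆ B) →
    A.card = 3 ∧ B.card = 3 := by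
  decide

/-- From reachability of a proper sub-node, one of the two successors contains it
(and reaches it). -/
lemma side_of_succ {D : RecLin (Fin 6)} {I K A B : Finset (Fin 6)}
    (hsucc : succOf D.arcs I = {A, B})
    (h : Relation.ReflTransGen (arc D) I K) (hne : K ≠ I) :
    (Relation.ReflTransGen (arc D) A K ∧ K ⊆ A) ∨
    (Relation.ReflTransGen (arc D) B K ∧ K ⊆ B) := by
  obtain ⟨X, hX, hr, hs⟩ := reach_step h hne
  rw [hsucc] at hX
  rcases Finset.mem_insert.1 hX with rfl | hX
  · exact Or.inl ⟨hr, hs⟩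
  · rw [Finset.mem_singleton] at hX
    subst hX
    exact Or.inr ⟨hr, hs⟩

/-- The main bound on `mp` at a 4-set whose four relevant pairs are all reachable. -/
lemma bound_F (D : RecLin (Fin 6)) (hbin : Binary D)
    (F C1 C2 P1 P2 : Finset (Fin 6)) (hFnode : F ∈ D.nodes) (hFns : ¬ IsSingleton F)
    (hdec : ∀ A B : Finset (Fin 6), A ∪ B = F → A ≠ F → B ≠ F →
      (C1 ⊆ A ∨ C1 ⊆ B) → (C2 ⊆ A ∨ C2 ⊆ B) → (P1 ⊆ A ∨ P1 ⊆ B) → (P2 ⊆ A ∨ P2 ⊆ B) →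
      A.card = 3 ∧ B.card = 3)
    (h1 : Relation.ReflTransGen (arc D) F C1) (h1n : C1 ≠ F)
    (h2 : Relation.ReflTransGen (arc D) F C2) (h2n : C2 ≠ F)
    (h3 : Relation.ReflTransGen (arc D) F P1) (h3n : P1 ≠ F)
    (h4 : Relation.ReflTransGen (arc D) F P2) (h4n : P2 ≠ F) :
    mp D (11/12) F ≤ 1/2 := by
  obtain ⟨A, B, hAB, hsucc⟩ := Finset.card_eq_two.1 (hbin F hFnode hFns)
  have hA : (F, A) ∈ D.arcs := mem_succOf.1 (hsucc ▸ Finset.mem_insert_self _ _)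
  have hB : (F, B) ∈ D.arcs := mem_succOf.1
    (hsucc ▸ Finset.mem_insert_of_mem (Finset.mem_singleton_self _))
  have hU : A ∪ B = F := by
    have := D.succ_union F hFnode hFns
    rw [hsucc, biUnion_pair] at this
    exact this
  have hAne : A ≠ F := (arc_ssubset hA).ne
  have hBne : B ≠ F := (arc_ssubset hB).ne
  have s1 := side_of_succ hsucc h1 h1n
  have s2 := side_of_succ hsucc h2 h2n
  have s3 := side_of_succ hsucc h3 h3n
  have s4 := side_of_succ hsucc h4 h4n
  obtain ⟨hcA, hcB⟩ := hdec A B hU hAne hBne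
    (s1.imp (fun h => h.2) (fun h => h.2)) (s2.imp (fun h => h.2) (fun h => h.2))
    (s3.imp (fun h => h.2) (fun h => h.2)) (s4.imp (fun h => h.2) (fun h => h.2))
  have hmA := mp_card_le D hbin A (D.arcs_snd_mem _ hA)
  have hmB := mp_card_le D hbin B (D.arcs_snd_mem _ hB)
  rw [hcA] at hmA
  rw [hcB] at hmB
  rw [mp_two D _ hFns hAB hsucc]
  apply max_le <;> [norm_num; skip]
  push_cast at hmA hmB
  linarith

/-- The final contradiction: `mp (11/12)` satisfies the top node inequality of `D₀`,
so its value at the ground set is at least `1/2`. -/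
lemma final (D : RecLin (Fin 6)) (hE : E7 ⊆ D.nodes)
    (hsub : projRelax D E7 ⊆ relax D7)
    (hVle : mp D (11/12) {0,1,2,3,4,5} ≤ 5/12) : False := by
  have hmem : mp D (11/12) ∈ relax D7 :=
    hsub ⟨mp D (11/12), mp_mem_relax D (by norm_num) (by norm_num), fun _ _ => rfl⟩
  have hineq := hmem.2.2 {0,1,2,3,4,5} (by decide) (by decide)
  have hsucc7 : succOf D7.arcs {0,1,2,3,4,5} = {{0,1},{2,3},{4,5}} := by decide
  rw [hsucc7] at hineq
  rw [Finset.sum_insert (by decide), Finset.sum_insert (by decide),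
    Finset.sum_singleton] at hineq
  have e1 : mp D (11/12) {0,1} = 5/6 := by
    rw [mp_pair D _ (by decide) (hE (by decide))]; norm_num
  have e2 : mp D (11/12) {2,3} = 5/6 := by
    rw [mp_pair D _ (by decide) (hE (by decide))]; norm_num
  have e3 : mp D (11/12) {4,5} = 5/6 := by
    rw [mp_pair D _ (by decide) (hE (by decide))]; norm_num
  rw [e1, e2, e3] at hineq
  linarith

end NB

/-- any recursive linearization `D` over `V` with `E ⊆ 𝒱(D)` and
`P_E(D) ⊆ P(D₀)` is non-binary. -/
theorem nonbinary_necessary (D : RecLin (Fin 6))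
    (hE : E7 ⊆ D.nodes) (hsub : projRelax D E7 ⊆ relax D7) :
    ¬ Binary D := by
  intro hbin
  by_cases hr1 : Relation.ReflTransGen (NB.arc D) {0,1,2,3,4,5} {0,1}
  case neg => exact NB.case1 D hbin hsub (by decide) (by decide) hr1
  by_cases hr2 : Relation.ReflTransGen (NB.arc D) {0,1,2,3,4,5} {2,3}
  case neg => exact NB.case1 D hbin hsub (by decide) (by decide) hr2
  by_cases hr3 : Relation.ReflTransGen (NB.arc D) {0,1,2,3,4,5} {4,5}
  case neg => exact NB.case1 D hbin hsub (by decide) (by decide) hr3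
  by_cases hr4 : Relation.ReflTransGen (NB.arc D) {0,1,2,3} {0,2}
  case neg => exact NB.case1 D hbin hsub (by decide) (by decide) hr4
  by_cases hr5 : Relation.ReflTransGen (NB.arc D) {0,1,2,3} {1,3}
  case neg => exact NB.case1 D hbin hsub (by decide) (by decide) hr5
  by_cases hr6 : Relation.ReflTransGen (NB.arc D) {0,1,4,5} {0,4}
  case neg => exact NB.case1 D hbin hsub (by decide) (by decide) hr6
  by_cases hr7 : Relation.ReflTransGen (NB.arc D) {0,1,4,5} {1,5}
  case neg => exact NB.case1 D hbin hsub (by decide) (by decide) hr7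
  by_cases hr8 : Relation.ReflTransGen (NB.arc D) {2,3,4,5} {2,4}
  case neg => exact NB.case1 D hbin hsub (by decide) (by decide) hr8
  by_cases hr9 : Relation.ReflTransGen (NB.arc D) {2,3,4,5} {3,5}
  case neg => exact NB.case1 D hbin hsub (by decide) (by decide) hr9
  -- case 2 : all nine reachabilities hold
  have hVnode : ({0,1,2,3,4,5} : Finset (Fin 6)) ∈ D.nodes := hE (by decide)
  have hVns : ¬ IsSingleton ({0,1,2,3,4,5} : Finset (Fin 6)) := by decide
  obtain ⟨J1, J2, hJ12, hsucc⟩ := Finset.card_eq_two.1 (hbin _ hVnode hVns)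
  have hAJ1 : (({0,1,2,3,4,5} : Finset (Fin 6)), J1) ∈ D.arcs :=
    NB.mem_succOf.1 (hsucc ▸ Finset.mem_insert_self _ _)
  have hAJ2 : (({0,1,2,3,4,5} : Finset (Fin 6)), J2) ∈ D.arcs :=
    NB.mem_succOf.1 (hsucc ▸ Finset.mem_insert_of_mem (Finset.mem_singleton_self _))
  have hU : J1 ∪ J2 = ({0,1,2,3,4,5} : Finset (Fin 6)) := by
    have := D.succ_union _ hVnode hVns
    rw [hsucc, NB.biUnion_pair] at this
    exact this
  have hJ1ne : J1 ≠ {0,1,2,3,4,5} := (NB.arc_ssubset hAJ1).ne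
  have hJ2ne : J2 ≠ {0,1,2,3,4,5} := (NB.arc_ssubset hAJ2).ne
  have s1 := NB.side_of_succ hsucc hr1 (by decide)
  have s2 := NB.side_of_succ hsucc hr2 (by decide)
  have s3 := NB.side_of_succ hsucc hr3 (by decide)
  have hmV : NB.mp D (11/12) {0,1,2,3,4,5}
      = max 0 (NB.mp D (11/12) J1 + NB.mp D (11/12) J2 - 1) :=
    NB.mp_two D _ hVns hJ12 hsucc
  rcases NB.shape_lemma J1 J2 hU hJ1ne hJ2ne
      (s1.imp And.right And.right) (s2.imp And.right And.right)
      (s3.imp And.right And.right) with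
    hne | ⟨hj1, hj2⟩ | ⟨hj1, hj2⟩ | ⟨hj1, hj2⟩ | ⟨hj1, hj2⟩ | ⟨hj1, hj2⟩ | ⟨hj1, hj2⟩
  · -- overlapping successors
    have hm1 := NB.mp_card_le D hbin J1 (D.arcs_snd_mem _ hAJ1)
    have hm2 := NB.mp_card_le D hbin J2 (D.arcs_snd_mem _ hAJ2)
    have hcc := Finset.card_union_add_card_inter J1 J2
    rw [hU] at hcc
    have hc6 : ({0,1,2,3,4,5} : Finset (Fin 6)).card = 6 := by decide
    rw [hc6] at hcc
    have hint : 1 ≤ (J1 ∩ J2).card :=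
      Finset.card_pos.2 (Finset.nonempty_iff_ne_empty.2 hne)
    have hsum : 7 ≤ J1.card + J2.card := by omega
    have hsumR : (7:ℝ) ≤ (J1.card : ℝ) + (J2.card : ℝ) := by exact_mod_cast hsum
    refine NB.final D hE hsub ?_
    rw [hmV]
    apply max_le <;> [norm_num; linarith]
  all_goals subst hj1; subst hj2
  · -- J1 = {0,1,2,3}, J2 = {4,5}
    rcases s1 with ⟨hra, _⟩ | ⟨_, hc⟩; swap; · exact absurd hc (by decide)
    rcases s2 with ⟨hrb, _⟩ | ⟨_, hc⟩; swap; · exact absurd hc (by decide)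
    have hFle := NB.bound_F D hbin {0,1,2,3} {0,2} {1,3} {0,1} {2,3} (hE (by decide))
      (by decide) NB.fourset_lemma1 hr4 (by decide) hr5 (by decide)
      hra (by decide) hrb (by decide)
    have hPval : NB.mp D (11/12) {4,5} = 5/6 := by
      rw [NB.mp_pair D _ (by decide) (hE (by decide))]; norm_num
    refine NB.final D hE hsub ?_
    rw [hmV, hPval]
    apply max_le <;> [norm_num; linarith]
  · -- J1 = {0,1,4,5}, J2 = {2,3}
    rcases s1 with ⟨hra, _⟩ | ⟨_, hc⟩; swap; · exact absurd hc (by decide)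
    rcases s3 with ⟨hrb, _⟩ | ⟨_, hc⟩; swap; · exact absurd hc (by decide)
    have hFle := NB.bound_F D hbin {0,1,4,5} {0,4} {1,5} {0,1} {4,5} (hE (by decide))
      (by decide) NB.fourset_lemma2 hr6 (by decide) hr7 (by decide)
      hra (by decide) hrb (by decide)
    have hPval : NB.mp D (11/12) {2,3} = 5/6 := by
      rw [NB.mp_pair D _ (by decide) (hE (by decide))]; norm_num
    refine NB.final D hE hsub ?_
    rw [hmV, hPval]
    apply max_le <;> [norm_num; linarith]
  · -- J1 = {2,3,4,5}, J2 = {0,1}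
    rcases s2 with ⟨hra, _⟩ | ⟨_, hc⟩; swap; · exact absurd hc (by decide)
    rcases s3 with ⟨hrb, _⟩ | ⟨_, hc⟩; swap; · exact absurd hc (by decide)
    have hFle := NB.bound_F D hbin {2,3,4,5} {2,4} {3,5} {2,3} {4,5} (hE (by decide))
      (by decide) NB.fourset_lemma3 hr8 (by decide) hr9 (by decide)
      hra (by decide) hrb (by decide)
    have hPval : NB.mp D (11/12) {0,1} = 5/6 := by
      rw [NB.mp_pair D _ (by decide) (hE (by decide))]; norm_num
    refine NB.final D hE hsub ?_
    rw [hmV, hPval]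
    apply max_le <;> [norm_num; linarith]
  · -- J2 = {0,1,2,3}, J1 = {4,5}
    rcases s1 with ⟨_, hc⟩ | ⟨hra, _⟩; · exact absurd hc (by decide)
    rcases s2 with ⟨_, hc⟩ | ⟨hrb, _⟩; · exact absurd hc (by decide)
    have hFle := NB.bound_F D hbin {0,1,2,3} {0,2} {1,3} {0,1} {2,3} (hE (by decide))
      (by decide) NB.fourset_lemma1 hr4 (by decide) hr5 (by decide)
      hra (by decide) hrb (by decide)
    have hPval : NB.mp D (11/12) {4,5} = 5/6 := by
      rw [NB.mp_pair D _ (by decide) (hE (by decide))]; norm_num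
    refine NB.final D hE hsub ?_
    rw [hmV, hPval]
    apply max_le <;> [norm_num; linarith]
  · -- J2 = {0,1,4,5}, J1 = {2,3}
    rcases s1 with ⟨_, hc⟩ | ⟨hra, _⟩; · exact absurd hc (by decide)
    rcases s3 with ⟨_, hc⟩ | ⟨hrb, _⟩; · exact absurd hc (by decide)
    have hFle := NB.bound_F D hbin {0,1,4,5} {0,4} {1,5} {0,1} {4,5} (hE (by decide))
      (by decide) NB.fourset_lemma2 hr6 (by decide) hr7 (by decide)
      hra (by decide) hrb (by decide)
    have hPval : NB.mp D (11/12) {2,3} = 5/6 := by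
      rw [NB.mp_pair D _ (by decide) (hE (by decide))]; norm_num
    refine NB.final D hE hsub ?_
    rw [hmV, hPval]
    apply max_le <;> [norm_num; linarith]
  · -- J2 = {2,3,4,5}, J1 = {0,1}
    rcases s2 with ⟨_, hc⟩ | ⟨hra, _⟩; · exact absurd hc (by decide)
    rcases s3 with ⟨_, hc⟩ | ⟨hrb, _⟩; · exact absurd hc (by decide)
    have hFle := NB.bound_F D hbin {2,3,4,5} {2,4} {3,5} {2,3} {4,5} (hE (by decide))
      (by decide) NB.fourset_lemma3 hr8 (by decide) hr9 (by decide)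
      hra (by decide) hrb (by decide)
    have hPval : NB.mp D (11/12) {0,1} = 5/6 := by
      rw [NB.mp_pair D _ (by decide) (hE (by decide))]; norm_num
    refine NB.final D hE hsub ?_
    rw [hmV, hPval]
    apply max_le <;> [norm_num; linarith]
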